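/- Let a, b, u be positive integers with u ≤ min(a,b). Let C be a set of lattice points contained in the rectangle [1,a]×[1,b] such that every diagonal chain in C has size at most u. Then there exists a collection of u pairwise vertex-disjoint lattice paths (with steps east (0,1) and north (-1,0) in matrix coordinates) connecting ((a-u+p,1)) for p=1,…,u to ((p,b)) for p=1,…,u whose union contains C. -/

import Mathlib

/-- A diagonal chain: a finite set of points in ℤ² that is strictly increasing
in both coordinates. -/
def IsDiagChain (D : Finset (ℤ × ℤ)) : Prop :=
  ∀ P ∈ D, ∀ Q ∈ D, P ≠ Q → (P.1 < Q.1 ∧ P.2 < Q.2) ∨ (Q.1 < P.1 ∧ Q.2 < P.2)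

/-- A lattice path in matrix coordinates: a nonempty list of points in ℤ² where
consecutive points differ by an east step (0,1) or a north step (-1,0). -/
def IsLatticePath (P : List (ℤ × ℤ)) : Prop :=
  P ≠ [] ∧ P.Chain' (fun A B => B = (A.1, A.2 + 1) ∨ B = (A.1 - 1, A.2))

namespace Stmt1Aux
open Classical

variable (a b u : ℕ) (C : Set (ℤ × ℤ))

noncomputable def F (i j : ℤ) : ℕ :=
  ((Finset.Icc ((1:ℤ),(1:ℤ)) ((a:ℤ),(b:ℤ))).powerset.filter
    (fun D => ↑D ⊆ C ∧ IsDiagChain D ∧ ∀ P ∈ D, P.1 ≤ i ∧ P.2 ≤ j)).sup Finset.card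

lemma mem_Ffilter {i j : ℤ} {D : Finset (ℤ × ℤ)} :
    D ∈ ((Finset.Icc ((1:ℤ),(1:ℤ)) ((a:ℤ),(b:ℤ))).powerset.filter
    (fun D => ↑D ⊆ C ∧ IsDiagChain D ∧ ∀ P ∈ D, P.1 ≤ i ∧ P.2 ≤ j)) ↔
    D ⊆ Finset.Icc ((1:ℤ),(1:ℤ)) ((a:ℤ),(b:ℤ)) ∧ ↑D ⊆ C ∧ IsDiagChain D ∧
      ∀ P ∈ D, P.1 ≤ i ∧ P.2 ≤ j := by
  simp [Finset.mem_filter, Finset.mem_powerset, and_assoc]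

lemma F_le (hchain : ∀ D : Finset (ℤ × ℤ), ↑D ⊆ C → IsDiagChain D → D.card ≤ u)
    (i j : ℤ) : F a b C i j ≤ u := by
  apply Finset.sup_le
  intro D hD
  rw [mem_Ffilter] at hD
  exact hchain D hD.2.1 hD.2.2.1

lemma F_mono {i j i' j' : ℤ} (hi : i ≤ i') (hj : j ≤ j') : F a b C i j ≤ F a b C i' j' := by
  apply Finset.sup_le
  intro D hD
  rw [mem_Ffilter] at hD
  apply Finset.le_sup (f := Finset.card)
  rw [mem_Ffilter]
  exact ⟨hD.1, hD.2.1, hD.2.2.1, fun P hP => ⟨(hD.2.2.2 P hP).1.trans hi, (hD.2.2.2 P hP).2.trans hj⟩⟩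

lemma F_eq_zero_row {i j : ℤ} (hi : i ≤ 0) : F a b C i j = 0 := by
  apply Nat.le_zero.mp
  apply Finset.sup_le
  intro D hD
  rw [mem_Ffilter] at hD
  rw [Finset.card_eq_zero.mpr]
  rcases Finset.eq_empty_or_nonempty D with h | ⟨P, hP⟩
  · exact h
  · exfalso
    have h1 := (Finset.mem_Icc.mp (hD.1 hP)).1.1
    have h2 := (hD.2.2.2 P hP).1
    omega

lemma F_eq_zero_col {i j : ℤ} (hj : j ≤ 0) : F a b C i j = 0 := by
  apply Nat.le_zero.mp
  apply Finset.sup_le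
  intro D hD
  rw [mem_Ffilter] at hD
  rw [Finset.card_eq_zero.mpr]
  rcases Finset.eq_empty_or_nonempty D with h | ⟨P, hP⟩
  · exact h
  · exfalso
    have h1 := (Finset.mem_Icc.mp (hD.1 hP)).1.2
    have h2 := (hD.2.2.2 P hP).2
    omega

lemma F_le_row {i : ℤ} (hi : 0 ≤ i) (j : ℤ) : (F a b C i j : ℤ) ≤ i := by
  have : F a b C i j ≤ i.toNat := by
    apply Finset.sup_le
    intro D hD
    rw [mem_Ffilter] at hD
    have hinj : Set.InjOn Prod.fst (D : Set (ℤ × ℤ)) := by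
      intro P hP Q hQ hPQ
      by_contra hne
      rcases hD.2.2.1 P hP Q hQ hne with ⟨h1, _⟩ | ⟨h1, _⟩ <;> omega
    calc D.card = (D.image Prod.fst).card := (Finset.card_image_of_injOn hinj).symm
    _ ≤ (Finset.Icc (1:ℤ) i).card := by
        apply Finset.card_le_card
        intro x hx
        obtain ⟨P, hP, rfl⟩ := Finset.mem_image.mp hx
        exact Finset.mem_Icc.mpr ⟨(Finset.mem_Icc.mp (hD.1 hP)).1.1, (hD.2.2.2 P hP).1⟩
    _ = i.toNat := by rw [Int.card_Icc]; omega
  omega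

lemma F_diag (i j : ℤ) : F a b C i j ≤ F a b C (i-1) (j-1) + 1 := by
  simp only [F]
  apply Finset.sup_le
  intro D hD
  rw [mem_Ffilter] at hD
  rcases Finset.eq_empty_or_nonempty D with rfl | hne
  · simp
  -- take the element with maximal first coordinate
  obtain ⟨M, hM, hMmax⟩ := D.exists_max_image Prod.fst hne
  have hMtop : ∀ P ∈ D, P ≠ M → P.1 < M.1 ∧ P.2 < M.2 := by
    intro P hP hne'
    rcases hD.2.2.1 P hP M hM hne' with h | ⟨h1, _⟩
    · exact h
    · exact absurd (hMmax P hP) (by omega)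
  have hsub : D.erase M ∈ ((Finset.Icc ((1:ℤ),(1:ℤ)) ((a:ℤ),(b:ℤ))).powerset.filter
      (fun D => ↑D ⊆ C ∧ IsDiagChain D ∧ ∀ P ∈ D, P.1 ≤ i-1 ∧ P.2 ≤ j-1)) := by
    rw [mem_Ffilter]
    refine ⟨(Finset.erase_subset _ _).trans hD.1,
      Set.Subset.trans (by exact_mod_cast Finset.coe_subset.mpr (Finset.erase_subset _ _)) hD.2.1,
      fun P hP Q hQ h => hD.2.2.1 P (Finset.mem_of_mem_erase hP) Q (Finset.mem_of_mem_erase hQ) h,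
      ?_⟩
    intro P hP
    have h1 := hMtop P (Finset.mem_of_mem_erase hP) (Finset.ne_of_mem_erase hP)
    have h2 := hD.2.2.2 M hM
    omega
  have := Finset.le_sup (f := Finset.card) hsub
  have hcard : D.card = (D.erase M).card + 1 := by
    rw [Finset.card_erase_of_mem hM]
    have := Finset.card_pos.mpr hne
    omega
  omega

lemma F_mem (hC : C ⊆ {P : ℤ × ℤ | 1 ≤ P.1 ∧ P.1 ≤ (a : ℤ) ∧ 1 ≤ P.2 ∧ P.2 ≤ (b : ℤ)})
    {i j : ℤ} (hij : (i, j) ∈ C) : F a b C (i-1) (j-1) + 1 ≤ F a b C i j := by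
  have hne : (((Finset.Icc ((1:ℤ),(1:ℤ)) ((a:ℤ),(b:ℤ))).powerset.filter
      (fun D => ↑D ⊆ C ∧ IsDiagChain D ∧ ∀ P ∈ D, P.1 ≤ i-1 ∧ P.2 ≤ j-1))).Nonempty := by
    refine ⟨∅, ?_⟩
    rw [mem_Ffilter]
    simp [IsDiagChain]
  obtain ⟨D, hD, hDcard⟩ := Finset.exists_mem_eq_sup _ hne Finset.card
  simp only [F]
  rw [hDcard]
  rw [mem_Ffilter] at hD
  have hnotmem : (i, j) ∉ D := by
    intro h
    have h2 : i ≤ i - 1 := (hD.2.2.2 _ h).1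
    omega
  have hins : insert (i,j) D ∈ ((Finset.Icc ((1:ℤ),(1:ℤ)) ((a:ℤ),(b:ℤ))).powerset.filter
      (fun D => ↑D ⊆ C ∧ IsDiagChain D ∧ ∀ P ∈ D, P.1 ≤ i ∧ P.2 ≤ j)) := by
    rw [mem_Ffilter]
    obtain ⟨hi1, hi2, hj1, hj2⟩ := hC hij
    refine ⟨?_, ?_, ?_, ?_⟩
    · intro P hP
      rcases Finset.mem_insert.mp hP with rfl | hP'
      · exact Finset.mem_Icc.mpr ⟨⟨hi1, hj1⟩, ⟨hi2, hj2⟩⟩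
      · exact hD.1 hP'
    · intro P hP
      rcases Finset.mem_insert.mp (Finset.mem_coe.mp hP) with rfl | hP'
      · exact hij
      · exact hD.2.1 hP'
    · intro P hP Q hQ hne'
      rcases Finset.mem_insert.mp hP with rfl | hP' <;>
        rcases Finset.mem_insert.mp hQ with hQe | hQ'
      · exact absurd hQe.symm hne'
      · right
        have h3 := hD.2.2.2 Q hQ'
        exact ⟨by simp only [Prod.fst]; omega, by simp only [Prod.snd]; omega⟩
      · left
        subst hQe
        have h3 := hD.2.2.2 P hP'
        exact ⟨by simp only [Prod.fst]; omega, by simp only [Prod.snd]; omega⟩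
      · exact hD.2.2.1 P hP' Q hQ' hne'
    · intro P hP
      rcases Finset.mem_insert.mp hP with rfl | hP'
      · simp
      · have h3 := hD.2.2.2 P hP'
        omega
  have := Finset.le_sup (f := Finset.card) hins
  rw [Finset.card_insert_of_notMem hnotmem] at this
  exact this

noncomputable def G (i j : ℤ) : ℤ :=
  max (max (F a b C i j : ℤ) (min i ((u:ℤ) - ((b:ℤ) - j)))) (i - ((a:ℤ) - (u:ℤ)))

lemma G_mono_i {i i' : ℤ} (h : i ≤ i') (j : ℤ) : G a b u C i j ≤ G a b u C i' j := by
  unfold G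
  have h1 : (F a b C i j : ℤ) ≤ F a b C i' j := by exact_mod_cast F_mono a b C h le_rfl
  omega

lemma G_mono_j (i : ℤ) {j j' : ℤ} (h : j ≤ j') : G a b u C i j ≤ G a b u C i j' := by
  unfold G
  have h1 : (F a b C i j : ℤ) ≤ F a b C i j' := by exact_mod_cast F_mono a b C le_rfl h
  omega

lemma G_diag (i j : ℤ) : G a b u C i j ≤ G a b u C (i-1) (j-1) + 1 := by
  unfold G
  have h1 : (F a b C i j : ℤ) ≤ (F a b C (i-1) (j-1) : ℤ) + 1 := by
    exact_mod_cast F_diag a b C i j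
  omega

lemma G_mem (hC : C ⊆ {P : ℤ × ℤ | 1 ≤ P.1 ∧ P.1 ≤ (a : ℤ) ∧ 1 ≤ P.2 ∧ P.2 ≤ (b : ℤ)})
    {i j : ℤ} (hij : (i, j) ∈ C) : G a b u C (i-1) (j-1) + 1 ≤ G a b u C i j := by
  unfold G
  have h1 : (F a b C (i-1) (j-1) : ℤ) + 1 ≤ F a b C i j := by
    exact_mod_cast F_mem a b C hC hij
  omega

lemma G_nonpos (hua : u ≤ a) {i : ℤ} (hi : i ≤ 0) (j : ℤ) : G a b u C i j ≤ 0 := by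
  unfold G
  have h1 : F a b C i j = 0 := F_eq_zero_row a b C hi
  have h2 : (u:ℤ) ≤ a := by exact_mod_cast hua
  omega

lemma G_top (j : ℤ) : (u:ℤ) ≤ G a b u C (a:ℤ) j := by
  unfold G
  omega

lemma G_le_u_on_C (hC : C ⊆ {P : ℤ × ℤ | 1 ≤ P.1 ∧ P.1 ≤ (a : ℤ) ∧ 1 ≤ P.2 ∧ P.2 ≤ (b : ℤ)})
    (hchain : ∀ D : Finset (ℤ × ℤ), ↑D ⊆ C → IsDiagChain D → D.card ≤ u)
    {i j : ℤ} (hij : (i, j) ∈ C) : G a b u C i j ≤ u := by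
  unfold G
  have h1 : (F a b C i j : ℤ) ≤ u := by exact_mod_cast F_le a b u C hchain i j
  obtain ⟨hi1, hi2, hj1, hj2⟩ := hC hij
  simp only at hi1 hi2 hj1 hj2
  omega

lemma G_pos_on_C (hC : C ⊆ {P : ℤ × ℤ | 1 ≤ P.1 ∧ P.1 ≤ (a : ℤ) ∧ 1 ≤ P.2 ∧ P.2 ≤ (b : ℤ)})
    {i j : ℤ} (hij : (i, j) ∈ C) : 1 ≤ G a b u C i j := by
  have h1 : (F a b C (i-1) (j-1) : ℤ) + 1 ≤ F a b C i j := by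
    exact_mod_cast F_mem a b C hC hij
  unfold G
  omega

lemma G_col0_lt (hub : u ≤ b) {p i : ℤ} (hp : 1 ≤ p) (hi : i < (a:ℤ) - u + p) :
    G a b u C i 0 < p := by
  unfold G
  have h1 : F a b C i 0 = 0 := F_eq_zero_col a b C le_rfl
  have h2 : (u:ℤ) ≤ b := by exact_mod_cast hub
  omega

lemma G_col0_ge {p : ℤ} : p ≤ G a b u C ((a:ℤ) - u + p) 0 := by
  unfold G
  omega

lemma G_colb_lt (hua : u ≤ a) {p : ℤ} (hp : 1 ≤ p) : G a b u C (p-1) (b:ℤ) ≤ p - 1 := by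
  unfold G
  have h1 : (F a b C (p-1) (b:ℤ) : ℤ) ≤ p - 1 := F_le_row a b C (by omega) _
  have h2 : (u:ℤ) ≤ a := by exact_mod_cast hua
  omega

lemma G_colb_ge {p : ℤ} (hp : 0 ≤ p) (hpu : p ≤ u) : p ≤ G a b u C p (b:ℤ) := by
  unfold G
  omega

noncomputable def S (p j : ℤ) : Finset ℤ :=
  (Finset.Icc 1 (a:ℤ)).filter (fun i => p ≤ G a b u C i j)

lemma S_nonempty (ha : 0 < a) {p : ℤ} (hpu : p ≤ u) (j : ℤ) : (S a b u C p j).Nonempty := by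
  refine ⟨(a:ℤ), ?_⟩
  unfold S
  rw [Finset.mem_filter, Finset.mem_Icc]
  exact ⟨⟨by exact_mod_cast ha, le_rfl⟩, hpu.trans (G_top a b u C j)⟩

noncomputable def ip (p j : ℤ) : ℤ := ((S a b u C p j).min.getD 1)

lemma ip_mem (ha : 0 < a) {p : ℤ} (hpu : p ≤ u) (j : ℤ) :
    ip a b u C p j ∈ S a b u C p j := by
  obtain ⟨m, hm⟩ := Finset.min_of_nonempty (S_nonempty a b u C ha hpu j)
  unfold ip
  rw [hm]
  exact Finset.mem_of_min hm

lemma ip_min {p j i : ℤ} (hi : i ∈ S a b u C p j) : ip a b u C p j ≤ i := by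
  obtain ⟨m, hm⟩ := Finset.min_of_mem hi
  unfold ip
  rw [hm]
  exact Finset.min_le_of_eq hi hm

lemma ip_ge_one (ha : 0 < a) {p : ℤ} (hpu : p ≤ u) (j : ℤ) : 1 ≤ ip a b u C p j := by
  have := ip_mem a b u C ha hpu j
  unfold S at this
  rw [Finset.mem_filter, Finset.mem_Icc] at this
  exact this.1.1

lemma ip_le_a (ha : 0 < a) {p : ℤ} (hpu : p ≤ u) (j : ℤ) : ip a b u C p j ≤ (a:ℤ) := by
  have := ip_mem a b u C ha hpu j
  unfold S at this
  rw [Finset.mem_filter, Finset.mem_Icc] at this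
  exact this.1.2

lemma G_ip (ha : 0 < a) {p : ℤ} (hpu : p ≤ u) (j : ℤ) :
    p ≤ G a b u C (ip a b u C p j) j := by
  have := ip_mem a b u C ha hpu j
  unfold S at this
  rw [Finset.mem_filter] at this
  exact this.2

lemma G_lt_of_lt_ip (ha : 0 < a) (hua : u ≤ a) {p j i : ℤ} (hp : 1 ≤ p) (hpu : p ≤ u)
    (hi : i < ip a b u C p j) : G a b u C i j < p := by
  by_contra hcon
  push_neg at hcon
  rcases le_or_gt i 0 with h0 | h0
  · have := G_nonpos a b u C hua h0 j
    omega
  · have : i ∈ S a b u C p j := by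
      unfold S
      rw [Finset.mem_filter, Finset.mem_Icc]
      exact ⟨⟨h0, hi.le.trans (ip_le_a a b u C ha hpu j)⟩, hcon⟩
    have := ip_min a b u C this
    omega

lemma ip_antitone (ha : 0 < a) {p : ℤ} (hpu : p ≤ u) {j j' : ℤ} (h : j ≤ j') :
    ip a b u C p j' ≤ ip a b u C p j := by
  apply ip_min
  unfold S
  rw [Finset.mem_filter, Finset.mem_Icc]
  exact ⟨⟨ip_ge_one a b u C ha hpu j, ip_le_a a b u C ha hpu j⟩,
    (G_ip a b u C ha hpu j).trans (G_mono_j a b u C _ h)⟩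

lemma ip_zero (ha : 0 < a) (hua : u ≤ a) (hub : u ≤ b) {p : ℤ} (hp : 1 ≤ p) (hpu : p ≤ u) :
    ip a b u C p 0 = (a:ℤ) - u + p := by
  have hle : ip a b u C p 0 ≤ (a:ℤ) - u + p := by
    apply ip_min
    unfold S
    rw [Finset.mem_filter, Finset.mem_Icc]
    have h2 : (u:ℤ) ≤ a := by exact_mod_cast hua
    exact ⟨⟨by omega, by omega⟩, G_col0_ge a b u C⟩
  have hge : ¬ (ip a b u C p 0 < (a:ℤ) - u + p) := by
    intro hlt
    have h1 := G_col0_lt a b u C hub hp hlt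
    have h2 := G_ip a b u C ha hpu 0
    omega
  omega

lemma ip_b (ha : 0 < a) (hua : u ≤ a) {p : ℤ} (hp : 1 ≤ p) (hpu : p ≤ u) :
    ip a b u C p (b:ℤ) = p := by
  have hle : ip a b u C p (b:ℤ) ≤ p := by
    apply ip_min
    unfold S
    rw [Finset.mem_filter, Finset.mem_Icc]
    have h2 : (u:ℤ) ≤ a := by exact_mod_cast hua
    exact ⟨⟨by omega, by omega⟩, G_colb_ge a b u C (by omega) hpu⟩
  have hge : ¬ (ip a b u C p (b:ℤ) < p) := by
    intro hlt
    have h1 := G_colb_lt a b u C hua hp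
    have h2 := G_ip a b u C ha hpu (b:ℤ)
    have h3 : ip a b u C p (b:ℤ) ≤ p - 1 := by omega
    have h4 := (G_mono_i a b u C h3 (b:ℤ)).trans h1
    omega
  omega

lemma ip_step (ha : 0 < a) (hua : u ≤ a) {p q j : ℤ} (hp : 1 ≤ p) (hpq : p < q)
    (hqu : q ≤ u) : ip a b u C p (j-1) < ip a b u C q j := by
  have hpu : p ≤ u := by omega
  have h1 : G a b u C (ip a b u C p (j-1) - 1) (j-1) < p :=
    G_lt_of_lt_ip a b u C ha hua hp hpu (by omega)
  have h2 := G_diag a b u C (ip a b u C p (j-1)) j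
  by_contra hcon
  push_neg at hcon
  have h3 := (G_ip a b u C ha hqu j).trans (G_mono_i a b u C hcon (j:ℤ))
  omega
noncomputable def seg (p j : ℤ) : List (ℤ × ℤ) :=
  (List.range ((ip a b u C p (j-1) - ip a b u C p j).toNat + 1)).map
    (fun t : ℕ => (ip a b u C p (j-1) - (t:ℤ), j))

lemma seg_ne_nil (p j : ℤ) : seg a b u C p j ≠ [] := by
  unfold seg
  simp [List.range_succ]

lemma seg_head (p j : ℤ) : (seg a b u C p j).head? = some (ip a b u C p (j-1), j) := by
  unfold seg
  rw [List.range_succ_eq_map]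
  simp

lemma seg_getLast (ha : 0 < a) {p : ℤ} (hpu : p ≤ u) (j : ℤ) :
    (seg a b u C p j).getLast? = some (ip a b u C p j, j) := by
  have hmono : ip a b u C p j ≤ ip a b u C p (j-1) := ip_antitone a b u C ha hpu (by omega)
  unfold seg
  rw [List.range_succ, List.map_append, List.map_cons, List.map_nil, List.getLast?_concat]
  congr 1
  have : ((ip a b u C p (j-1) - ip a b u C p j).toNat : ℤ)
      = ip a b u C p (j-1) - ip a b u C p j := by omega
  rw [this]
  rw [Prod.mk.injEq]
  exact ⟨by omega, rfl⟩

lemma seg_chain (p j : ℤ) :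
    (seg a b u C p j).Chain' (fun A B => B = (A.1, A.2 + 1) ∨ B = (A.1 - 1, A.2)) := by
  unfold seg
  unfold List.Chain'; rw [List.isChain_map, List.isChain_range_succ]
  intro m hm
  right
  rw [Prod.mk.injEq]
  exact ⟨by push_cast; ring, rfl⟩

lemma mem_seg (ha : 0 < a) {p : ℤ} (hpu : p ≤ u) (j : ℤ) {x : ℤ × ℤ} :
    x ∈ seg a b u C p j ↔
      x.2 = j ∧ ip a b u C p j ≤ x.1 ∧ x.1 ≤ ip a b u C p (j-1) := by
  have hmono : ip a b u C p j ≤ ip a b u C p (j-1) := ip_antitone a b u C ha hpu (by omega)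
  unfold seg
  rw [List.mem_map]
  constructor
  · rintro ⟨t, ht, rfl⟩
    rw [List.mem_range] at ht
    refine ⟨rfl, ?_, ?_⟩ <;> simp only <;> omega
  · rintro ⟨h2, h3, h4⟩
    refine ⟨(ip a b u C p (j-1) - x.1).toNat, ?_, ?_⟩
    · rw [List.mem_range]
      omega
    · have : (((ip a b u C p (j-1) - x.1).toNat) : ℤ) = ip a b u C p (j-1) - x.1 := by omega
      rw [this]
      ext <;> simp <;> omega

noncomputable def pathN (p : ℤ) (n : ℕ) : List (ℤ × ℤ) :=
  ((List.range n).map (fun k : ℕ => seg a b u C p ((k:ℤ)+1))).flatten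

lemma pathN_succ (p : ℤ) (n : ℕ) :
    pathN a b u C p (n+1) = pathN a b u C p n ++ seg a b u C p ((n:ℤ)+1) := by
  unfold pathN
  rw [List.range_succ, List.map_append, List.flatten_append]
  simp

lemma mem_pathN (p : ℤ) (n : ℕ) {x : ℤ × ℤ} :
    x ∈ pathN a b u C p n ↔ ∃ k < n, x ∈ seg a b u C p ((k:ℤ)+1) := by
  unfold pathN
  rw [List.mem_flatten]
  constructor
  · rintro ⟨l, hl, hx⟩
    rw [List.mem_map] at hl
    obtain ⟨k, hk, rfl⟩ := hl
    exact ⟨k, List.mem_range.mp hk, hx⟩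
  · rintro ⟨k, hk, hx⟩
    exact ⟨_, List.mem_map.mpr ⟨k, List.mem_range.mpr hk, rfl⟩, hx⟩

lemma pathN_props (ha : 0 < a) {p : ℤ} (hpu : p ≤ u) (n : ℕ) :
    (pathN a b u C p (n+1)).Chain' (fun A B => B = (A.1, A.2 + 1) ∨ B = (A.1 - 1, A.2)) ∧
    (pathN a b u C p (n+1)).head? = some (ip a b u C p 0, 1) ∧
    (pathN a b u C p (n+1)).getLast? = some (ip a b u C p ((n:ℤ)+1), (n:ℤ)+1) := by
  induction n with
  | zero =>
    have : pathN a b u C p 1 = seg a b u C p 1 := by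
      unfold pathN
      rw [show List.range 1 = [0] from rfl, List.map_cons, List.map_nil, List.flatten_cons, List.flatten_nil,
        List.append_nil]
      norm_num
    rw [this]
    refine ⟨seg_chain a b u C p 1, ?_, ?_⟩
    · rw [seg_head]
      norm_num
    · rw [seg_getLast a b u C ha hpu]
      norm_num
  | succ n ih =>
    obtain ⟨ih1, ih2, ih3⟩ := ih
    rw [pathN_succ]
    push_cast
    have hne : pathN a b u C p (n+1) ≠ [] := by
      intro h
      rw [h] at ih2
      simp at ih2
    have hne2 : seg a b u C p ((n:ℤ)+1+1) ≠ [] := seg_ne_nil a b u C p _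
    refine ⟨?_, ?_, ?_⟩
    · unfold List.Chain'; rw [List.isChain_append]
      refine ⟨ih1, seg_chain a b u C p _, ?_⟩
      intro x hx y hy
      rw [ih3] at hx
      rw [seg_head] at hy
      simp only [Option.mem_some_iff] at hx hy
      subst hx; subst hy
      left
      rw [Prod.mk.injEq]
      constructor
      · congr 1
        push_cast
        ring
      · push_cast
        ring
    · rw [List.head?_append_of_ne_nil _ hne]
      · exact ih2
    · rw [List.getLast?_append_of_ne_nil _ hne2, seg_getLast a b u C ha hpu]
lemma disjoint_helper (ha : 0 < a) (hua : u ≤ a) {p q : ℤ} (hp : 1 ≤ p) (hpq : p < q)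
    (hqu : q ≤ u) {x : ℤ × ℤ} (hx : x ∈ pathN a b u C p b) : x ∉ pathN a b u C q b := by
  intro hx'
  rw [mem_pathN] at hx hx'
  obtain ⟨k, hk, hxk⟩ := hx
  obtain ⟨k', hk', hxk'⟩ := hx'
  have hpu : p ≤ (u:ℤ) := by omega
  rw [mem_seg a b u C ha hpu] at hxk
  rw [mem_seg a b u C ha hqu] at hxk'
  have hkk : (k:ℤ) = (k':ℤ) := by omega
  have hstep := ip_step a b u C ha hua hp hpq hqu (j := (k:ℤ)+1)
  have he : (k:ℤ) + 1 - 1 = (k:ℤ) := by ring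
  rw [← hkk] at hxk'
  rw [he] at hstep hxk hxk'
  omega

theorem main (ha : 0 < a) (hb : 0 < b) (hu : 0 < u)
    (hua : u ≤ a) (hub : u ≤ b)
    (hC : C ⊆ {P : ℤ × ℤ | 1 ≤ P.1 ∧ P.1 ≤ (a : ℤ) ∧ 1 ≤ P.2 ∧ P.2 ≤ (b : ℤ)})
    (hchain : ∀ D : Finset (ℤ × ℤ), ↑D ⊆ C → IsDiagChain D → D.card ≤ u) :
    ∃ H : Fin u → List (ℤ × ℤ),
      (∀ p, IsLatticePath (H p)) ∧
      (∀ p : Fin u, (H p).head? = some ((a : ℤ) - (u : ℤ) + ((p : ℕ) : ℤ) + 1, 1)) ∧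
      (∀ p : Fin u, (H p).getLast? = some (((p : ℕ) : ℤ) + 1, (b : ℤ))) ∧
      (∀ p q : Fin u, p ≠ q → ∀ x ∈ H p, x ∉ H q) ∧
      (∀ x ∈ C, ∃ p, x ∈ H p) := by
  obtain ⟨n, rfl⟩ : ∃ n, b = n + 1 := ⟨b - 1, by omega⟩
  set b := n + 1 with hbdef
  refine ⟨fun p => pathN a b u C (((p:ℕ):ℤ)+1) b, ?_, ?_, ?_, ?_, ?_⟩
  · intro p
    have hpu : ((p:ℕ):ℤ)+1 ≤ (u:ℤ) := by
      have := p.2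
      omega
    obtain ⟨h1, h2, h3⟩ := pathN_props a b u C ha hpu n
    refine ⟨fun hnil => ?_, h1⟩
    have hnil' : pathN a b u C (((p:ℕ):ℤ)+1) b = [] := hnil
    rw [hnil'] at h2
    simp at h2
  · intro p
    have hpu : ((p:ℕ):ℤ)+1 ≤ (u:ℤ) := by
      have := p.2
      omega
    obtain ⟨h1, h2, h3⟩ := pathN_props a b u C ha hpu n
    rw [h2, ip_zero a b u C ha hua hub (by omega) hpu]
    congr 2
    ring
  · intro p
    have hpu : ((p:ℕ):ℤ)+1 ≤ (u:ℤ) := by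
      have := p.2
      omega
    obtain ⟨h1, h2, h3⟩ := pathN_props a b u C ha hpu n
    rw [h3]
    have hnb : ((n:ℤ)+1) = ((b:ℕ):ℤ) := by
      rw [hbdef]
      push_cast
      ring
    rw [hnb, ip_b a b u C ha hua (by omega) hpu]
  · intro p q hpq x hx
    rcases lt_or_gt_of_ne (fun h : ((p:ℕ):ℤ) = ((q:ℕ):ℤ) => hpq (Fin.ext (by exact_mod_cast h))) with h | h
    · exact disjoint_helper a b u C ha hua (by omega) (by omega)
        (by have := q.2; omega) hx
    · intro hx'
      exact disjoint_helper a b u C ha hua (by omega) (by omega)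
        (by have := p.2; omega) hx' hx
  · intro x hx
    obtain ⟨hx1, hx2, hx3, hx4⟩ := hC hx
    have hxe : ((x.1, x.2) : ℤ × ℤ) = x := rfl
    have hxC : (x.1, x.2) ∈ C := by rw [hxe]; exact hx
    set pz := G a b u C x.1 x.2 with hpz
    have hpz1 : 1 ≤ pz := G_pos_on_C a b u C hC hxC
    have hpzu : pz ≤ (u:ℤ) := G_le_u_on_C a b u C hC hchain hxC
    refine ⟨⟨(pz - 1).toNat, by omega⟩, ?_⟩
    have hcast : ((((pz - 1).toNat : ℕ)):ℤ) + 1 = pz := by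
      omega
    rw [mem_pathN]
    refine ⟨(x.2 - 1).toNat, by omega, ?_⟩
    have hjk : (((x.2 - 1).toNat : ℕ):ℤ) + 1 = x.2 := by omega
    rw [hcast, hjk, mem_seg a b u C ha hpzu]
    refine ⟨rfl, ?_, ?_⟩
    · apply ip_min
      unfold S
      rw [Finset.mem_filter, Finset.mem_Icc]
      exact ⟨⟨hx1, hx2⟩, le_rfl⟩
    · by_contra hcon
      push_neg at hcon
      have h1 : ip a b u C pz (x.2 - 1) ≤ x.1 - 1 := by omega
      have h2 := (G_ip a b u C ha hpzu (x.2 - 1)).trans (G_mono_i a b u C h1 (x.2 - 1))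
      have h3 := G_mem a b u C hC hxC
      omega
end Stmt1Aux

theorem stmt1 (a b u : ℕ) (ha : 0 < a) (hb : 0 < b) (hu : 0 < u)
    (hua : u ≤ a) (hub : u ≤ b)
    (C : Set (ℤ × ℤ))
    (hC : C ⊆ {P : ℤ × ℤ | 1 ≤ P.1 ∧ P.1 ≤ (a : ℤ) ∧ 1 ≤ P.2 ∧ P.2 ≤ (b : ℤ)})
    (hchain : ∀ D : Finset (ℤ × ℤ), ↑D ⊆ C → IsDiagChain D → D.card ≤ u) :
    ∃ H : Fin u → List (ℤ × ℤ),
      (∀ p, IsLatticePath (H p)) ∧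
      (∀ p : Fin u, (H p).head? = some ((a : ℤ) - (u : ℤ) + ((p : ℕ) : ℤ) + 1, 1)) ∧
      (∀ p : Fin u, (H p).getLast? = some (((p : ℕ) : ℤ) + 1, (b : ℤ))) ∧
      (∀ p q : Fin u, p ≠ q → ∀ x ∈ H p, x ∉ H q) ∧
      (∀ x ∈ C, ∃ p, x ∈ H p) :=
  Stmt1Aux.main a b u C ha hb hu hua hub hC hchain
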